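/- Let C : Grp ⥤ Grp be a functor and ι : C ⟶ 𝟭 Grp a natural transformation. Then for every group G the range of the underlying group homomorphism of ι.app G is a normal subgroup of G, and there exist a functor U : Grp ⥤ Grp and a natural transformation π : 𝟭 Grp ⟶ U such that for every group G the component π.app G is surjective and its kernel equals the range of ι.app G. -/

import Mathlib

open CategoryTheory

def auxN (C : GrpCat ⥤ GrpCat) (ι : C ⟶ 𝟭 GrpCat) (G : GrpCat) : Subgroup G :=
  MonoidHom.range (ι.app G).hom

lemma aux_mem_range {C : GrpCat ⥤ GrpCat} {ι : C ⟶ 𝟭 GrpCat} {G H : GrpCat} (f : G ⟶ H) (x : G)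
    (hx : x ∈ auxN C ι G) : f x ∈ auxN C ι H := by
  obtain ⟨y, hy⟩ := hx
  refine ⟨C.map f y, ?_⟩
  have h2 : (ι.app H) ((C.map f) y) = f ((ι.app G) y) :=
    ConcreteCategory.congr_hom (ι.naturality f) y
  exact h2.trans (congrArg f hy)

instance aux_normal (C : GrpCat ⥤ GrpCat) (ι : C ⟶ 𝟭 GrpCat) (G : GrpCat) :
    (auxN C ι G).Normal := by
  constructor
  intro n hn g
  have : (GrpCat.ofHom (MulAut.conj g).toMonoidHom : G ⟶ G) n ∈ auxN C ι G :=
    aux_mem_range _ n hn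
  simpa [MulAut.conj] using this

noncomputable def auxU (C : GrpCat ⥤ GrpCat) (ι : C ⟶ 𝟭 GrpCat) : GrpCat ⥤ GrpCat where
  obj G := GrpCat.of (G ⧸ auxN C ι G)
  map {G H} f := GrpCat.ofHom <|
    QuotientGroup.map (auxN C ι G) (auxN C ι H) f.hom (fun x hx => aux_mem_range f x hx)
  map_id G := by
    ext x
    rfl
  map_comp {G H K} f g := by
    ext x
    rfl

noncomputable def auxπ (C : GrpCat ⥤ GrpCat) (ι : C ⟶ 𝟭 GrpCat) : 𝟭 GrpCat ⟶ auxU C ι where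
  app G := GrpCat.ofHom (QuotientGroup.mk' (auxN C ι G))
  naturality {G H} f := by
    ext x
    rfl

theorem cokernel_of_counit (C : GrpCat ⥤ GrpCat) (ι : C ⟶ 𝟭 GrpCat) :
    (∀ G : GrpCat, (MonoidHom.range (ι.app G).hom).Normal) ∧
    ∃ (U : GrpCat ⥤ GrpCat) (π : 𝟭 GrpCat ⟶ U),
      ∀ G : GrpCat, Function.Surjective (π.app G) ∧
        MonoidHom.ker (π.app G).hom = MonoidHom.range (ι.app G).hom := by
  refine ⟨fun G => aux_normal C ι G, auxU C ι, auxπ C ι, fun G => ⟨?_, ?_⟩⟩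
  · exact QuotientGroup.mk'_surjective _
  · exact QuotientGroup.ker_mk' (auxN C ι G)
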